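/- Let n ≥ 1 and let A be an MR-subalgebra of 𝓛ₙ with tp(A) = ⟨t₁, …, tₙ⟩, k = Σᵢ tᵢ and r = Σᵢ i·tᵢ. Then the orbit of A under the evaluation action of Aut(𝓛ₙ) on MR-subalgebras satisfies |Orb(A)| · ∏_{i=1}^{n} (i!)^{tᵢ} · tᵢ! = 2^{r−k} · C(n,r) · r!, where C(n,r) is the binomial coefficient. -/

import Mathlib

@[ext] structure Cube (n : ℕ) where
  pos : Finset (Fin n)
  neg : Finset (Fin n)
  disj : Disjoint pos neg

namespace Cube
variable {n : ℕ}

instance : PartialOrder (Cube n) where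
  le x y := y.pos ⊆ x.pos ∧ y.neg ⊆ x.neg
  le_refl x := ⟨subset_rfl, subset_rfl⟩
  le_trans x y z h₁ h₂ := ⟨h₂.1.trans h₁.1, h₂.2.trans h₁.2⟩
  le_antisymm x y h₁ h₂ :=
    Cube.ext (subset_antisymm h₂.1 h₁.1) (subset_antisymm h₂.2 h₁.2)

instance : OrderTop (Cube n) where
  top := ⟨∅, ∅, by simp⟩
  le_top x := ⟨Finset.empty_subset _, Finset.empty_subset _⟩

instance : SemilatticeSup (Cube n) where
  sup x y := ⟨x.pos ∩ y.pos, x.neg ∩ y.neg,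
    x.disj.mono Finset.inter_subset_left Finset.inter_subset_left⟩
  le_sup_left x y := ⟨Finset.inter_subset_left, Finset.inter_subset_left⟩
  le_sup_right x y := ⟨Finset.inter_subset_right, Finset.inter_subset_right⟩
  sup_le x y z hx hy := ⟨Finset.subset_inter hx.1 hy.1, Finset.subset_inter hx.2 hy.2⟩

/-- The reflection `Δ(x, y)` of `y` through the centre of `x`. -/
def delta (x y : Cube n) : Cube n :=
  ⟨x.pos ∪ (y.neg \ x.neg), x.neg ∪ (y.pos \ x.pos), by
    simp only [Finset.disjoint_union_left, Finset.disjoint_union_right]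
    refine ⟨⟨x.disj, Finset.sdiff_disjoint⟩, Finset.disjoint_sdiff, ?_⟩
    exact y.disj.symm.mono Finset.sdiff_subset Finset.sdiff_subset⟩

lemma delta_le (x y : Cube n) : delta x y ≤ x :=
  ⟨Finset.subset_union_left, Finset.subset_union_left⟩

/-- The co-rank of a face of the `n`-cube. -/
def corank (x : Cube n) : ℕ := (x.pos ∪ x.neg).card

/-- The set of coatoms of `𝓛ₙ` lying above `a`. -/
def coatomsAbove (a : Cube n) : Set (Cube n) := {c | corank c = 1 ∧ a ≤ c}

/-- `A` is an MR-subalgebra of `𝓛ₙ`. -/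
def IsMRSub (A : Set (Cube n)) : Prop :=
  ⊤ ∈ A ∧ (∀ x ∈ A, ∀ y ∈ A, x ⊔ y ∈ A) ∧
    (∀ x ∈ A, ∀ y ∈ A, y ≤ x → delta x y ∈ A) ∧
    (∀ x ∈ A, ∀ y ∈ A, ∃ m ∈ A, IsGLB {x, delta (x ⊔ y) y} m)

/-- The coatoms of a subalgebra `A`: maximal elements of `A \ {⊤}`. -/
def coAt (A : Set (Cube n)) : Set (Cube n) :=
  {a | a ∈ A ∧ a ≠ ⊤ ∧ ∀ b ∈ A, b ≠ ⊤ → a ≤ b → b = a}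

/-- The coatoms `a` of `A` with `|𝒞ₐ| = i`. -/
def typeSet (A : Set (Cube n)) (i : ℕ) : Set (Cube n) :=
  {a | a ∈ coAt A ∧ (coatomsAbove a).ncard = i}

/-- An order automorphism of `𝓛ₙ` is a cubic automorphism when it preserves `Δ`. -/
def IsAut (φ : Cube n ≃o Cube n) : Prop :=
  ∀ x y : Cube n, y ≤ x → φ (delta x y) = delta (φ x) (φ y)

/-- The set of automorphisms of `𝓛ₙ`. -/
def AutSet (n : ℕ) : Set (Cube n ≃o Cube n) := {φ | IsAut φ}

/-- An automorphism of the subposet `A` preserving `Δ`. -/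
def IsSubAut {A : Set (Cube n)} (ψ : A ≃o A) : Prop :=
  ∀ (x y : A), (y : Cube n) ≤ (x : Cube n) → ∀ h : delta ↑x ↑y ∈ A,
    (ψ ⟨delta ↑x ↑y, h⟩ : Cube n) = delta ↑(ψ x) ↑(ψ y)

end Cube

namespace Cube
variable {n : ℕ}

instance : DecidableEq (Cube n) := fun x y =>
  decidable_of_iff (x.pos = y.pos ∧ x.neg = y.neg) (by cases x; cases y; simp [Cube.ext_iff])

noncomputable instance : Fintype (Cube n) :=
  Fintype.ofInjective (fun x => (x.pos, x.neg))
    (fun a b h => by cases a; cases b; simpa [Cube.ext_iff] using h)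

@[simp] lemma top_pos : (⊤ : Cube n).pos = ∅ := rfl
@[simp] lemma top_neg : (⊤ : Cube n).neg = ∅ := rfl
@[simp] lemma sup_pos (x y : Cube n) : (x ⊔ y).pos = x.pos ∩ y.pos := rfl
@[simp] lemma sup_neg (x y : Cube n) : (x ⊔ y).neg = x.neg ∩ y.neg := rfl
@[simp] lemma delta_pos (x y : Cube n) : (delta x y).pos = x.pos ∪ (y.neg \ x.neg) := rfl
@[simp] lemma delta_neg (x y : Cube n) : (delta x y).neg = x.neg ∪ (y.pos \ x.pos) := rfl

lemma le_def {x y : Cube n} : x ≤ y ↔ y.pos ⊆ x.pos ∧ y.neg ⊆ x.neg := Iff.rfl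

lemma eq_top_iff' {x : Cube n} : x = ⊤ ↔ x.pos = ∅ ∧ x.neg = ∅ := by
  cases x; simp [Cube.ext_iff]

/-- The opposite face. -/
def hat (x : Cube n) : Cube n := ⟨x.neg, x.pos, x.disj.symm⟩

@[simp] lemma hat_pos (x : Cube n) : (hat x).pos = x.neg := rfl
@[simp] lemma hat_neg (x : Cube n) : (hat x).neg = x.pos := rfl
@[simp] lemma hat_hat (x : Cube n) : hat (hat x) = x := by cases x; rfl

lemma delta_top (x : Cube n) : delta ⊤ x = hat x := by
  apply Cube.ext <;> simp

@[simp] lemma hat_eq_top_iff {x : Cube n} : hat x = ⊤ ↔ x = ⊤ := by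
  simp [eq_top_iff', hat, and_comm]

lemma hat_inj {x y : Cube n} (h : hat x = hat y) : x = y := by
  rw [← hat_hat x, h, hat_hat]

/-- The support of a face. -/
def supp (x : Cube n) : Finset (Fin n) := x.pos ∪ x.neg

lemma corank_eq_card_supp (x : Cube n) : corank x = (supp x).card := rfl

@[simp] lemma supp_hat (x : Cube n) : supp (hat x) = supp x := by
  simp [supp, Finset.union_comm]

@[simp] lemma corank_hat (x : Cube n) : corank (hat x) = corank x := by
  simp [corank_eq_card_supp]

lemma supp_subset_of_le {x y : Cube n} (h : x ≤ y) : supp y ⊆ supp x :=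
  Finset.union_subset_union h.1 h.2

lemma eq_top_iff_supp {x : Cube n} : x = ⊤ ↔ supp x = ∅ := by
  simp [eq_top_iff', supp, Finset.union_eq_empty]

lemma corank_eq_zero_iff {x : Cube n} : corank x = 0 ↔ x = ⊤ := by
  simp [corank_eq_card_supp, Finset.card_eq_zero, eq_top_iff_supp]

lemma card_pos_add_card_neg (x : Cube n) : x.pos.card + x.neg.card = corank x := by
  rw [corank_eq_card_supp, supp, Finset.card_union_of_disjoint x.disj]

lemma eq_of_le_of_corank_le {x y : Cube n} (h : x ≤ y) (hc : corank x ≤ corank y) : y = x := by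
  have h1 : y.pos.card ≤ x.pos.card := Finset.card_le_card h.1
  have h2 : y.neg.card ≤ x.neg.card := Finset.card_le_card h.2
  have := card_pos_add_card_neg x
  have := card_pos_add_card_neg y
  apply Cube.ext
  · exact Finset.eq_of_subset_of_card_le h.1 (by omega)
  · exact Finset.eq_of_subset_of_card_le h.2 (by omega)

lemma sup_eq_top_iff {x y : Cube n} :
    x ⊔ y = ⊤ ↔ x.pos ∩ y.pos = ∅ ∧ x.neg ∩ y.neg = ∅ := by
  simp [eq_top_iff']

lemma disjoint_supp_iff {x y : Cube n} :
    Disjoint (supp x) (supp y) ↔ x ⊔ y = ⊤ ∧ x ⊔ hat y = ⊤ := by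
  simp only [sup_eq_top_iff, hat_pos, hat_neg, supp, Finset.disjoint_union_left,
    Finset.disjoint_union_right, ← Finset.disjoint_iff_inter_eq_empty]
  tauto

/-- A coatom of `𝓛ₙ` is order-theoretically characterised. -/
lemma corank_eq_one_iff {c : Cube n} :
    corank c = 1 ↔ c ≠ ⊤ ∧ ∀ z, c ≤ z → z = c ∨ z = ⊤ := by
  constructor
  · intro h1
    refine ⟨fun h => by subst h; simp [corank] at h1, ?_⟩
    · intro z hz
      rcases Nat.lt_or_ge (corank z) 1 with h | h
      · exact Or.inr (corank_eq_zero_iff.1 (by omega))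
      · exact Or.inl (eq_of_le_of_corank_le hz (by omega))
  · rintro ⟨h1, h2⟩
    have h3 : 1 ≤ corank c := by
      rcases Nat.eq_zero_or_pos (corank c) with h | h
      · exact absurd (corank_eq_zero_iff.1 h) h1
      · exact h
    rcases Nat.lt_or_ge (corank c) 2 with h | h
    · omega
    · -- pick an element of the support and build a strictly intermediate face
      exfalso
      have hne : (supp c).Nonempty := Finset.card_pos.1 (by rw [← corank_eq_card_supp]; omega)
      obtain ⟨j, hj⟩ := hne
      rcases Finset.mem_union.1 hj with hjp | hjn
      · have := h2 ⟨{j}, ∅, by simp⟩ ⟨by simpa using hjp, by simp⟩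
        rcases this with h' | h'
        · have : corank c = 1 := by rw [← h']; simp [corank, Finset.card_singleton]
          omega
        · simp [eq_top_iff', Finset.singleton_ne_empty] at h'
      · have := h2 ⟨∅, {j}, by simp⟩ ⟨by simp, by simpa using hjn⟩
        rcases this with h' | h'
        · have : corank c = 1 := by rw [← h']; simp [corank, Finset.card_singleton]
          omega
        · simp [eq_top_iff', Finset.singleton_ne_empty] at h'

end Cube

namespace Cube
variable {n : ℕ}

/-- The positive coatom at coordinate `j`. -/
def posC (j : Fin n) : Cube n := ⟨{j}, ∅, by simp⟩
/-- The negative coatom at coordinate `j`. -/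
def negC (j : Fin n) : Cube n := ⟨∅, {j}, by simp⟩

@[simp] lemma posC_pos (j : Fin n) : (posC j).pos = {j} := rfl
@[simp] lemma posC_neg (j : Fin n) : (posC j).neg = ∅ := rfl
@[simp] lemma negC_pos (j : Fin n) : (negC j).pos = ∅ := rfl
@[simp] lemma negC_neg (j : Fin n) : (negC j).neg = {j} := rfl

lemma mem_coatomsAbove {a c : Cube n} :
    c ∈ coatomsAbove a ↔ (∃ j ∈ a.pos, c = posC j) ∨ ∃ j ∈ a.neg, c = negC j := by
  constructor
  · rintro ⟨h1, h2⟩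
    have : (c.pos ∪ c.neg).card = 1 := h1
    obtain ⟨j, hj⟩ := Finset.card_eq_one.1 this
    rcases Finset.mem_union.1 (hj ▸ Finset.mem_singleton_self j) with hp | hn
    · left
      refine ⟨j, h2.1 hp, ?_⟩
      have hps : c.pos = {j} := by
        apply subset_antisymm
        · exact fun x hx => hj ▸ Finset.mem_union_left _ hx
        · simpa using hp
      have hns : c.neg = ∅ := by
        rw [Finset.eq_empty_iff_forall_notMem]
        intro x hx
        have hx' : x ∈ ({j} : Finset (Fin n)) := hj ▸ Finset.mem_union_right _ hx
        rw [Finset.mem_singleton] at hx'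
        subst hx'
        exact (Finset.disjoint_left.1 c.disj) hp hx
      exact Cube.ext (by simp [hps]) (by simp [hns])
    · right
      refine ⟨j, h2.2 hn, ?_⟩
      have hns : c.neg = {j} := by
        apply subset_antisymm
        · exact fun x hx => hj ▸ Finset.mem_union_right _ hx
        · simpa using hn
      have hps : c.pos = ∅ := by
        rw [Finset.eq_empty_iff_forall_notMem]
        intro x hx
        have hx' : x ∈ ({j} : Finset (Fin n)) := hj ▸ Finset.mem_union_left _ hx
        rw [Finset.mem_singleton] at hx'
        subst hx'
        exact (Finset.disjoint_left.1 c.disj) hx hn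
      exact Cube.ext (by simp [hps]) (by simp [hns])
  · rintro (⟨j, hj, rfl⟩ | ⟨j, hj, rfl⟩) <;>
      exact ⟨by simp [corank], by simp [le_def, Finset.singleton_subset_iff, hj]⟩

lemma coatomsAbove_eq_coe (a : Cube n) :
    coatomsAbove a = ↑(a.pos.image posC ∪ a.neg.image negC) := by
  ext c
  simp only [mem_coatomsAbove, Finset.coe_union, Set.mem_union, Finset.coe_image,
    Set.mem_image, Finset.mem_coe]
  constructor
  · rintro (⟨j, hj, rfl⟩ | ⟨j, hj, rfl⟩)
    · exact Or.inl ⟨j, hj, rfl⟩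
    · exact Or.inr ⟨j, hj, rfl⟩
  · rintro (⟨j, hj, rfl⟩ | ⟨j, hj, rfl⟩)
    · exact Or.inl ⟨j, hj, rfl⟩
    · exact Or.inr ⟨j, hj, rfl⟩

lemma posC_injective : Function.Injective (posC (n := n)) := by
  intro a b h
  have := congrArg Cube.pos h
  simpa using this

lemma negC_injective : Function.Injective (negC (n := n)) := by
  intro a b h
  have := congrArg Cube.neg h
  simpa using this

lemma ncard_coatomsAbove (a : Cube n) : (coatomsAbove a).ncard = corank a := by
  rw [coatomsAbove_eq_coe, Set.ncard_coe_finset]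
  rw [Finset.card_union_of_disjoint, Finset.card_image_of_injective _ posC_injective,
    Finset.card_image_of_injective _ negC_injective, card_pos_add_card_neg]
  · rw [Finset.disjoint_left]
    rintro c hc hc'
    obtain ⟨j, _, rfl⟩ := Finset.mem_image.1 hc
    obtain ⟨j', _, h⟩ := Finset.mem_image.1 hc'
    have := congrArg Cube.pos h
    simp [Finset.singleton_ne_empty] at this

end Cube

namespace Cube
variable {n : ℕ} {A B : Set (Cube n)}

lemma IsMRSub.hat_mem (hA : IsMRSub A) {x : Cube n} (hx : x ∈ A) : hat x ∈ A := by
  have := hA.2.2.1 ⊤ hA.1 x hx le_top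
  rwa [delta_top] at this

lemma IsMRSub.sup_mem (hA : IsMRSub A) {x y : Cube n} (hx : x ∈ A) (hy : y ∈ A) :
    x ⊔ y ∈ A := hA.2.1 x hx y hy

lemma coAt_mem {a : Cube n} (h : a ∈ coAt A) : a ∈ A := h.1
lemma coAt_ne_top {a : Cube n} (h : a ∈ coAt A) : a ≠ ⊤ := h.2.1

lemma IsMRSub.hat_coAt (hA : IsMRSub A) {a : Cube n} (ha : a ∈ coAt A) : hat a ∈ coAt A := by
  refine ⟨hA.hat_mem ha.1, by simpa using ha.2.1, ?_⟩
  intro b hb hbt hle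
  have h1 : a ≤ hat b := ⟨hle.2, hle.1⟩
  have h2 := ha.2.2 (hat b) (hA.hat_mem hb) (by simpa using hbt) h1
  rw [← h2, hat_hat]

/-- Two coatoms of `A` that are above a common element must coincide or be opposite. -/
lemma coAt_eq_of_le {a b x : Cube n} (ha : a ∈ coAt A) (hb : b ∈ coAt A)
    (hxa : x ≤ a) (hxb : x ≤ b) : True := trivial

lemma IsMRSub.sup_coAt_eq_top (hA : IsMRSub A) {a b : Cube n} (ha : a ∈ coAt A)
    (hb : b ∈ coAt A) (hne : b ≠ a) : a ⊔ b = ⊤ := by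
  by_contra h
  have hmem : a ⊔ b ∈ A := hA.sup_mem ha.1 hb.1
  have h1 : a ⊔ b = a := ha.2.2 _ hmem h le_sup_left
  have h2 : b ≤ a := sup_eq_left.1 h1
  exact hne (hb.2.2 a ha.1 ha.2.1 h2).symm

lemma IsMRSub.coAt_disjoint_supp (hA : IsMRSub A) {a b : Cube n} (ha : a ∈ coAt A)
    (hb : b ∈ coAt A) (hne : b ≠ a) (hne' : b ≠ hat a) : Disjoint (supp a) (supp b) := by
  rw [disjoint_supp_iff]
  refine ⟨hA.sup_coAt_eq_top ha hb hne, hA.sup_coAt_eq_top ha (hA.hat_coAt hb) ?_⟩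
  intro h
  exact hne' (by rw [← hat_hat b, h])

/-- Two distinct coatoms of the big cube above a common element are never opposite. -/
lemma not_hat_of_le {c x : Cube n} (hc : c ≠ ⊤) (h1 : x ≤ c) (h2 : x ≤ hat c) : False := by
  have hp : c.pos ⊆ x.pos := h1.1
  have hn : c.neg ⊆ x.pos := h2.1
  have hp' : c.pos ⊆ x.neg := h2.2
  have : c.pos = ∅ := Finset.eq_empty_iff_forall_notMem.2 fun j hj =>
    (Finset.disjoint_left.1 x.disj) (hp hj) (hp' hj)
  have : c.neg = ∅ := Finset.eq_empty_iff_forall_notMem.2 fun j hj =>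
    (Finset.disjoint_left.1 x.disj) (hn hj) (h1.2 hj)
  exact hc (eq_top_iff'.2 ⟨‹c.pos = ∅›, this⟩)

lemma IsMRSub.exists_coAt_le (hA : IsMRSub A) {x : Cube n} (hx : x ∈ A) (hxt : x ≠ ⊤) :
    ∃ c ∈ coAt A, x ≤ c := by
  have hfin : ({y ∈ A | x ≤ y ∧ y ≠ ⊤}).Finite := Set.toFinite _
  have hne : ({y ∈ A | x ≤ y ∧ y ≠ ⊤}).Nonempty := ⟨x, hx, le_refl x, hxt⟩
  obtain ⟨c, hc, hmax⟩ := Set.Finite.exists_maximalFor id _ hfin hne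
  refine ⟨c, ⟨hc.1, hc.2.2, ?_⟩, hc.2.1⟩
  intro b hb hbt hcb
  exact le_antisymm (hmax (j := b) ⟨hb, hc.2.1.trans hcb, hbt⟩ hcb) hcb

lemma IsMRSub.reduce_mem (hA : IsMRSub A) {x c : Cube n} (hx : x ∈ A) (hc : c ∈ A)
    (hxc : x ≤ c) : ∃ u ∈ A, x ≤ u ∧ u.pos = x.pos \ c.pos ∧ u.neg = x.neg \ c.neg := by
  have hd : delta c x ∈ A := hA.2.2.1 c hc x hx hxc
  refine ⟨x ⊔ hat (delta c x), hA.sup_mem hx (hA.hat_mem hd), le_sup_left, ?_, ?_⟩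
  · ext j
    simp only [sup_pos, hat_pos, delta_neg, Finset.mem_inter, Finset.mem_union,
      Finset.mem_sdiff]
    have f1 : j ∈ c.neg → j ∈ x.neg := fun h => hxc.2 h
    have f2 : j ∈ x.pos → j ∉ x.neg := fun h => Finset.disjoint_left.1 x.disj h
    tauto
  · ext j
    simp only [sup_neg, hat_neg, delta_pos, Finset.mem_inter, Finset.mem_union,
      Finset.mem_sdiff]
    have f1 : j ∈ c.pos → j ∈ x.pos := fun h => hxc.1 h
    have f2 : j ∈ x.pos → j ∉ x.neg := fun h => Finset.disjoint_left.1 x.disj h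
    tauto

lemma IsMRSub.cover (hA : IsMRSub A) :
    ∀ (m : ℕ) (x : Cube n), x ∈ A → corank x = m →
      ∀ j ∈ supp x, ∃ c ∈ coAt A, x ≤ c ∧ j ∈ supp c := by
  intro m
  induction m using Nat.strong_induction_on with
  | _ m IH =>
    intro x hx hm j hj
    have hxt : x ≠ ⊤ := by
      intro h; subst h; simp [supp] at hj
    obtain ⟨c, hcA, hxc⟩ := hA.exists_coAt_le hx hxt
    by_cases hjc : j ∈ supp c
    · exact ⟨c, hcA, hxc, hjc⟩
    · obtain ⟨u, huA, hxu, hup, hun⟩ := hA.reduce_mem hx hcA.1 hxc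
      have hsu : supp u = supp x \ supp c := by
        rw [supp, hup, hun, supp, supp]
        ext i
        simp only [Finset.mem_union, Finset.mem_sdiff]
        have f1 : i ∈ x.pos → i ∉ c.neg := fun h h' =>
          Finset.disjoint_left.1 x.disj h (hxc.2 h')
        have f2 : i ∈ x.neg → i ∉ c.pos := fun h h' =>
          Finset.disjoint_left.1 x.disj (hxc.1 h') h
        tauto
      have hsc : supp c ⊆ supp x := supp_subset_of_le hxc
      have hscne : (supp c).Nonempty := by
        rw [Finset.nonempty_iff_ne_empty]
        exact fun h => coAt_ne_top hcA (eq_top_iff_supp.2 h)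
      have hlt : corank u < m := by
        rw [← hm, corank_eq_card_supp, corank_eq_card_supp, hsu]
        exact Finset.card_lt_card (Finset.sdiff_ssubset hsc hscne)
      have hju : j ∈ supp u := by rw [hsu, Finset.mem_sdiff]; exact ⟨hj, hjc⟩
      obtain ⟨c', hc'A, huc', hjc'⟩ := IH (corank u) hlt u huA rfl j hju
      exact ⟨c', hc'A, hxu.trans huc', hjc'⟩

/-- If every coordinate of `x` is covered by a coatom of `B` above `x`, then `x ∈ B`. -/
lemma IsMRSub.mem_of_cover (hB : IsMRSub B) :
    ∀ (m : ℕ) (x : Cube n), corank x = m →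
      (∀ j ∈ supp x, ∃ c ∈ coAt B, x ≤ c ∧ j ∈ supp c) → x ∈ B := by
  intro m
  induction m using Nat.strong_induction_on with
  | _ m IH =>
    intro x hm hcov
    by_cases hxt : x = ⊤
    · rw [hxt]; exact hB.1
    · have hne : (supp x).Nonempty := by
        rw [Finset.nonempty_iff_ne_empty]
        exact fun h => hxt (eq_top_iff_supp.2 h)
      obtain ⟨j, hj⟩ := hne
      obtain ⟨c, hcB, hxc, hjc⟩ := hcov j hj
      -- the face `y` obtained by deleting the coordinates of `c` from `x`
      have hdisj : Disjoint (x.pos \ c.pos) (x.neg \ c.neg) :=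
        x.disj.mono Finset.sdiff_subset Finset.sdiff_subset
      set y : Cube n := ⟨x.pos \ c.pos, x.neg \ c.neg, hdisj⟩ with hy
      have hxy : x ≤ y := ⟨Finset.sdiff_subset, Finset.sdiff_subset⟩
      have hsy : supp y = supp x \ supp c := by
        rw [supp, supp, supp]
        ext i
        simp only [Finset.mem_union, Finset.mem_sdiff, hy]
        have f1 : i ∈ x.pos → i ∉ c.neg := fun h h' =>
          Finset.disjoint_left.1 x.disj h (hxc.2 h')
        have f2 : i ∈ x.neg → i ∉ c.pos := fun h h' =>
          Finset.disjoint_left.1 x.disj (hxc.1 h') h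
        tauto
      have hsc : supp c ⊆ supp x := supp_subset_of_le hxc
      have hscne : (supp c).Nonempty := by
        rw [Finset.nonempty_iff_ne_empty]
        exact fun h => coAt_ne_top hcB (eq_top_iff_supp.2 h)
      have hlt : corank y < m := by
        rw [← hm, corank_eq_card_supp, corank_eq_card_supp, hsy]
        exact Finset.card_lt_card (Finset.sdiff_ssubset hsc hscne)
      -- y satisfies the covering hypothesis
      have hycov : ∀ i ∈ supp y, ∃ c' ∈ coAt B, y ≤ c' ∧ i ∈ supp c' := by
        intro i hi
        have hix : i ∈ supp x := by rw [hsy] at hi; exact (Finset.mem_sdiff.1 hi).1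
        have hic : i ∉ supp c := by rw [hsy] at hi; exact (Finset.mem_sdiff.1 hi).2
        obtain ⟨c', hc'B, hxc', hic'⟩ := hcov i hix
        have hne1 : c' ≠ c := fun h => hic (h ▸ hic')
        have hne2 : c' ≠ hat c := fun h => not_hat_of_le (coAt_ne_top hcB) hxc (h ▸ hxc')
        have hdsupp : Disjoint (supp c) (supp c') := hB.coAt_disjoint_supp hcB hc'B hne1 hne2
        refine ⟨c', hc'B, ⟨?_, ?_⟩, hic'⟩
        · intro a ha
          rw [hy]
          simp only [Finset.mem_sdiff]
          refine ⟨hxc'.1 ha, fun h => ?_⟩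
          exact Finset.disjoint_left.1 hdsupp (Finset.mem_union_left _ h)
            (Finset.mem_union_left _ ha)
        · intro a ha
          rw [hy]
          simp only [Finset.mem_sdiff]
          refine ⟨hxc'.2 ha, fun h => ?_⟩
          exact Finset.disjoint_left.1 hdsupp (Finset.mem_union_right _ h)
            (Finset.mem_union_right _ ha)
      have hyB : y ∈ B := IH (corank y) hlt y rfl hycov
      -- now x is the meet of y and c, which is produced by the caret operation
      have hyc : y ⊔ hat c = ⊤ := by
        rw [sup_eq_top_iff]
        constructor
        · rw [Finset.eq_empty_iff_forall_notMem]
          intro a ha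
          simp only [hy, hat_pos, Finset.mem_inter, Finset.mem_sdiff] at ha
          exact Finset.disjoint_left.1 x.disj ha.1.1 (hxc.2 ha.2)
        · rw [Finset.eq_empty_iff_forall_notMem]
          intro a ha
          simp only [hy, hat_neg, Finset.mem_inter, Finset.mem_sdiff] at ha
          exact Finset.disjoint_left.1 x.disj (hxc.1 ha.2) ha.1.1
      obtain ⟨g, hgB, hglb⟩ := hB.2.2.2 y hyB (hat c) (hB.hat_mem hcB.1)
      rw [hyc, delta_top, hat_hat] at hglb
      have hxglb : IsGLB {y, c} x := by
        constructor
        · rintro z (rfl | hz)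
          · exact hxy
          · simp only [Set.mem_singleton_iff] at hz; rw [hz]; exact hxc
        · intro z hz
          have hzy : z ≤ y := hz (Set.mem_insert _ _)
          have hzc : z ≤ c := hz (Set.mem_insert_of_mem _ rfl)
          constructor
          · intro a ha
            by_cases hac : a ∈ c.pos
            · exact hzc.1 hac
            · exact hzy.1 (by rw [hy]; simp only [Finset.mem_sdiff]; exact ⟨ha, hac⟩)
          · intro a ha
            by_cases hac : a ∈ c.neg
            · exact hzc.2 hac
            · exact hzy.2 (by rw [hy]; simp only [Finset.mem_sdiff]; exact ⟨ha, hac⟩)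
      rwa [hglb.unique hxglb] at hgB

theorem IsMRSub.eq_of_coAt_eq (hA : IsMRSub A) (hB : IsMRSub B) (h : coAt A = coAt B) :
    A = B := by
  have main : ∀ (A B : Set (Cube n)), IsMRSub A → IsMRSub B → coAt A = coAt B → A ⊆ B := by
    intro A B hA hB h x hx
    refine hB.mem_of_cover (corank x) x rfl ?_
    intro j hj
    obtain ⟨c, hcA, hxc, hjc⟩ := hA.cover (corank x) x hx rfl j hj
    exact ⟨c, h ▸ hcA, hxc, hjc⟩
  exact Set.Subset.antisymm (main A B hA hB h) (main B A hB hA h.symm)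

end Cube

namespace Cube
variable {n : ℕ}

/-- The action of a signed permutation on the faces of the cube. -/
def act (σ : Equiv.Perm (Fin n)) (ε : Fin n → Bool) (x : Cube n) : Cube n :=
  ⟨Finset.univ.filter fun j =>
      (ε (σ.symm j) = true ∧ σ.symm j ∈ x.neg) ∨ (ε (σ.symm j) = false ∧ σ.symm j ∈ x.pos),
   Finset.univ.filter fun j =>
      (ε (σ.symm j) = true ∧ σ.symm j ∈ x.pos) ∨ (ε (σ.symm j) = false ∧ σ.symm j ∈ x.neg),
   by
    rw [Finset.disjoint_left]
    intro j hj hj'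
    simp only [Finset.mem_filter, Finset.mem_univ, true_and] at hj hj'
    have := Finset.disjoint_left.1 x.disj
    rcases hj with ⟨h1, h2⟩ | ⟨h1, h2⟩ <;> rcases hj' with ⟨h3, h4⟩ | ⟨h3, h4⟩ <;>
      first
        | (exact this h4 h2)
        | (exact this h2 h4)
        | (rw [h1] at h3; exact Bool.noConfusion h3)⟩

lemma mem_act_pos {σ : Equiv.Perm (Fin n)} {ε : Fin n → Bool} {x : Cube n} {j : Fin n} :
    j ∈ (act σ ε x).pos ↔
      (ε (σ.symm j) = true ∧ σ.symm j ∈ x.neg) ∨ (ε (σ.symm j) = false ∧ σ.symm j ∈ x.pos) := by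
  simp [act]

lemma mem_act_neg {σ : Equiv.Perm (Fin n)} {ε : Fin n → Bool} {x : Cube n} {j : Fin n} :
    j ∈ (act σ ε x).neg ↔
      (ε (σ.symm j) = true ∧ σ.symm j ∈ x.pos) ∨ (ε (σ.symm j) = false ∧ σ.symm j ∈ x.neg) := by
  simp [act]

lemma act_act (σ : Equiv.Perm (Fin n)) (ε : Fin n → Bool) (x : Cube n) :
    act σ.symm (ε ∘ σ.symm) (act σ ε x) = x := by
  apply Cube.ext <;> ext j <;>
    simp only [mem_act_pos, mem_act_neg, Equiv.symm_symm, Function.comp_apply,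
      Equiv.symm_apply_apply] <;>
    rcases hε : ε j with _ | _ <;> simp

/-- `act` as an order isomorphism. -/
def actIso (σ : Equiv.Perm (Fin n)) (ε : Fin n → Bool) : Cube n ≃o Cube n where
  toFun := act σ ε
  invFun := act σ.symm (ε ∘ σ.symm)
  left_inv x := act_act σ ε x
  right_inv x := by
    have := act_act σ.symm (ε ∘ σ.symm) x
    simp only [Equiv.symm_symm] at this
    convert this using 3
    ext j
    simp
  map_rel_iff' := by
    have mono : ∀ (σ : Equiv.Perm (Fin n)) (ε : Fin n → Bool) (x y : Cube n),
        x ≤ y → act σ ε x ≤ act σ ε y := by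
      intro σ ε x y h
      constructor
      · intro j hj
        rw [mem_act_pos] at hj ⊢
        rcases hj with ⟨h1, h2⟩ | ⟨h1, h2⟩
        · exact Or.inl ⟨h1, h.2 h2⟩
        · exact Or.inr ⟨h1, h.1 h2⟩
      · intro j hj
        rw [mem_act_neg] at hj ⊢
        rcases hj with ⟨h1, h2⟩ | ⟨h1, h2⟩
        · exact Or.inl ⟨h1, h.1 h2⟩
        · exact Or.inr ⟨h1, h.2 h2⟩
    intro x y
    constructor
    · intro h
      have := mono σ.symm (ε ∘ σ.symm) _ _ h
      simp only [Equiv.coe_fn_mk] at this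
      rwa [act_act, act_act] at this
    · exact mono σ ε x y

lemma actIso_apply (σ : Equiv.Perm (Fin n)) (ε : Fin n → Bool) (x : Cube n) :
    actIso σ ε x = act σ ε x := rfl

lemma actIso_isAut (σ : Equiv.Perm (Fin n)) (ε : Fin n → Bool) : IsAut (actIso σ ε) := by
  intro x y _
  apply Cube.ext <;> ext j <;>
    simp only [actIso_apply, mem_act_pos, mem_act_neg, delta_pos, delta_neg,
      Finset.mem_union, Finset.mem_sdiff, mem_act_pos, mem_act_neg] <;>
    rcases hε : ε (σ.symm j) with _ | _ <;> simp <;> try tauto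

end Cube

namespace Cube
variable {n : ℕ} {φ : Cube n ≃o Cube n} {A : Set (Cube n)}

lemma IsAut.map_hat (hφ : IsAut φ) (x : Cube n) : φ (hat x) = hat (φ x) := by
  have := hφ ⊤ x le_top
  rwa [delta_top, OrderIso.map_top, delta_top] at this

lemma eq_top_iff_map {x : Cube n} : φ x = ⊤ ↔ x = ⊤ := by
  constructor
  · intro h
    have : φ x = φ ⊤ := by rw [h, OrderIso.map_top]
    exact φ.injective this
  · rintro rfl; exact φ.map_top

lemma corank_one_map {c : Cube n} : corank (φ c) = 1 ↔ corank c = 1 := by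
  rw [corank_eq_one_iff, corank_eq_one_iff]
  constructor
  · rintro ⟨h1, h2⟩
    refine ⟨fun h => h1 (by rw [h, OrderIso.map_top]), fun z hz => ?_⟩
    have := h2 (φ z) (φ.le_iff_le.2 hz)
    rcases this with h | h
    · exact Or.inl (φ.injective h)
    · exact Or.inr (eq_top_iff_map.1 h)
  · rintro ⟨h1, h2⟩
    refine ⟨fun h => h1 (eq_top_iff_map.1 h), fun z hz => ?_⟩
    have hz' : c ≤ φ.symm z := by
      rw [← φ.symm_apply_apply c]
      exact φ.symm.le_iff_le.2 hz
    rcases h2 (φ.symm z) hz' with h | h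
    · exact Or.inl (by rw [← h, φ.apply_symm_apply])
    · right
      rw [← φ.apply_symm_apply z, h, OrderIso.map_top]

lemma coatomsAbove_map (a : Cube n) : coatomsAbove (φ a) = φ '' coatomsAbove a := by
  ext c
  simp only [coatomsAbove, Set.mem_setOf_eq, Set.mem_image]
  constructor
  · rintro ⟨h1, h2⟩
    refine ⟨φ.symm c, ⟨?_, ?_⟩, φ.apply_symm_apply c⟩
    · rw [← corank_one_map (φ := φ), φ.apply_symm_apply]; exact h1
    · rw [← φ.symm_apply_apply a]; exact φ.symm.le_iff_le.2 h2
  · rintro ⟨w, ⟨h1, h2⟩, rfl⟩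
    exact ⟨corank_one_map.2 h1, φ.le_iff_le.2 h2⟩

lemma corank_map (x : Cube n) : corank (φ x) = corank x := by
  rw [← ncard_coatomsAbove, ← ncard_coatomsAbove, coatomsAbove_map,
    Set.ncard_image_of_injective _ φ.injective]

lemma IsAut.isMRSub_image (hφ : IsAut φ) (hA : IsMRSub A) : IsMRSub (φ '' A) := by
  refine ⟨⟨⊤, hA.1, OrderIso.map_top φ⟩, ?_, ?_, ?_⟩
  · rintro _ ⟨x, hx, rfl⟩ _ ⟨y, hy, rfl⟩
    exact ⟨x ⊔ y, hA.sup_mem hx hy, OrderIso.map_sup φ x y⟩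
  · rintro _ ⟨x, hx, rfl⟩ _ ⟨y, hy, rfl⟩ hle
    have hle' : y ≤ x := φ.le_iff_le.1 hle
    exact ⟨delta x y, hA.2.2.1 x hx y hy hle', hφ x y hle'⟩
  · rintro _ ⟨x, hx, rfl⟩ _ ⟨y, hy, rfl⟩
    obtain ⟨m, hm, hglb⟩ := hA.2.2.2 x hx y hy
    refine ⟨φ m, ⟨m, hm, rfl⟩, ?_⟩
    have h1 : φ x ⊔ φ y = φ (x ⊔ y) := (OrderIso.map_sup φ x y).symm
    have h2 : delta (φ x ⊔ φ y) (φ y) = φ (delta (x ⊔ y) y) := by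
      rw [h1, hφ (x ⊔ y) y le_sup_right]
    rw [h2]
    have : {φ x, φ (delta (x ⊔ y) y)} = φ '' {x, delta (x ⊔ y) y} := by
      simp [Set.image_insert_eq]
    rw [this]
    exact (OrderIso.isGLB_image' (f := φ)).2 hglb

lemma coAt_image : coAt (φ '' A) = φ '' coAt A := by
  ext c
  simp only [coAt, Set.mem_setOf_eq, Set.mem_image]
  constructor
  · rintro ⟨⟨x, hx, rfl⟩, h2, h3⟩
    refine ⟨x, ⟨hx, fun h => h2 (by rw [h, OrderIso.map_top]), ?_⟩, rfl⟩
    intro b hb hbt hle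
    have := h3 (φ b) ⟨b, hb, rfl⟩ (fun h => hbt (eq_top_iff_map.1 h)) (φ.le_iff_le.2 hle)
    exact φ.injective this
  · rintro ⟨x, ⟨hx, hxt, hmax⟩, rfl⟩
    refine ⟨⟨x, hx, rfl⟩, fun h => hxt (eq_top_iff_map.1 h), ?_⟩
    rintro _ ⟨b, hb, rfl⟩ hbt hle
    rw [hmax b hb (fun h => hbt (by rw [h, OrderIso.map_top])) (φ.le_iff_le.1 hle)]

end Cube

namespace Cube
variable {n : ℕ}

open scoped Classical in
/-- A configuration over `U`: a hat-closed set of non-top faces with supports inside `U`,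
pairwise disjoint except for opposite pairs. -/
def IsConfig (U : Finset (Fin n)) (C : Finset (Cube n)) : Prop :=
  (∀ a ∈ C, a ≠ ⊤ ∧ supp a ⊆ U) ∧ (∀ a ∈ C, hat a ∈ C) ∧
    (∀ a ∈ C, ∀ b ∈ C, b ≠ a → b ≠ hat a → Disjoint (supp a) (supp b))

open scoped Classical in
/-- The number of elements of a configuration of corank `i`. -/
noncomputable def typeCount (C : Finset (Cube n)) (i : ℕ) : ℕ :=
  (C.filter fun a => corank a = i).card

open scoped Classical in
/-- The configurations over `U` of type `t`. -/
noncomputable def configs (U : Finset (Fin n)) (t : ℕ → ℕ) : Finset (Finset (Cube n)) :=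
  Finset.univ.filter fun C => IsConfig U C ∧ ∀ i, typeCount C i = 2 * t i

open scoped Classical

lemma mem_configs {U : Finset (Fin n)} {t : ℕ → ℕ} {C : Finset (Cube n)} :
    C ∈ configs U t ↔ IsConfig U C ∧ ∀ i, typeCount C i = 2 * t i := by
  simp [configs]

lemma ne_top_of_corank {a : Cube n} {i : ℕ} (h : corank a = i) (hi : 1 ≤ i) : a ≠ ⊤ :=
  fun ht => by rw [ht] at h; simp [corank] at h; omega

lemma supp_nonempty_of_ne_top {a : Cube n} (h : a ≠ ⊤) : (supp a).Nonempty := by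
  rw [Finset.nonempty_iff_ne_empty]
  exact fun h' => h (eq_top_iff_supp.2 h')

lemma hat_ne_self {a : Cube n} (h : a ≠ ⊤) : hat a ≠ a := by
  intro he
  have h2 : a.neg = a.pos := congrArg Cube.pos he
  apply h
  rw [eq_top_iff']
  have hp : a.pos = ∅ := by
    rw [Finset.eq_empty_iff_forall_notMem]
    intro j hj
    have hn : j ∈ a.neg := by rw [h2]; exact hj
    exact Finset.disjoint_left.1 a.disj hj hn
  exact ⟨hp, by rw [h2, hp]⟩

/-- Counting the faces of given corank with support inside `U`. -/
lemma card_faces (U : Finset (Fin n)) (m : ℕ) :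
    (Finset.univ.filter fun a : Cube n => corank a = m ∧ supp a ⊆ U).card =
      2 ^ m * U.card.choose m := by
  have : ((U.powersetCard m).sigma fun S => S.powerset).card =
      ∑ S ∈ U.powersetCard m, 2 ^ m := by
    rw [Finset.card_sigma]
    apply Finset.sum_congr rfl
    intro S hS
    rw [Finset.card_powerset, (Finset.mem_powersetCard.1 hS).2]
  rw [Finset.sum_const, Finset.card_powersetCard, smul_eq_mul] at this
  have hbij : (Finset.univ.filter fun a : Cube n => corank a = m ∧ supp a ⊆ U).card =
      ((U.powersetCard m).sigma fun S => S.powerset).card := by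
    apply Finset.card_nbij' (fun a => ⟨supp a, a.pos⟩)
      (fun p => ⟨p.2, p.1 \ p.2, Finset.disjoint_sdiff⟩)
    · intro a ha
      rw [Finset.mem_coe, Finset.mem_filter] at ha
      rw [Finset.mem_coe, Finset.mem_sigma, Finset.mem_powersetCard]
      exact ⟨⟨ha.2.2, ha.2.1⟩, Finset.mem_powerset.2 Finset.subset_union_left⟩
    · intro p hp
      rw [Finset.mem_coe, Finset.mem_sigma, Finset.mem_powersetCard, Finset.mem_powerset] at hp
      rw [Finset.mem_coe, Finset.mem_filter]
      have hsupp : supp (⟨p.2, p.1 \ p.2, Finset.disjoint_sdiff⟩ : Cube n) = p.1 := by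
        rw [supp]
        simp only
        rw [Finset.union_sdiff_of_subset hp.2]
      refine ⟨Finset.mem_univ _, ?_, ?_⟩
      · rw [corank_eq_card_supp, hsupp, hp.1.2]
      · rw [hsupp]; exact hp.1.1
    · intro a ha
      apply Cube.ext
      · rfl
      · simp only
        rw [supp, Finset.union_sdiff_left, Finset.sdiff_eq_self_of_disjoint a.disj.symm]
    · intro p hp
      rw [Finset.mem_coe, Finset.mem_sigma, Finset.mem_powersetCard, Finset.mem_powerset] at hp
      have hsupp : supp (⟨p.2, p.1 \ p.2, Finset.disjoint_sdiff⟩ : Cube n) = p.1 := by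
        rw [supp]
        simp only
        rw [Finset.union_sdiff_of_subset hp.2]
      exact Sigma.ext hsupp (by simp)
  rw [hbij, this, mul_comm]

lemma descFactorial_mul_descFactorial :
    ∀ (r i u : ℕ), i ≤ r → u.descFactorial i * (u - i).descFactorial (r - i) =
      u.descFactorial r := by
  intro r
  induction r with
  | zero => intro i u h; interval_cases i; simp
  | succ r IH =>
    intro i u h
    rcases Nat.lt_or_ge i (r + 1) with h' | h'
    · have hi : i ≤ r := by omega
      have : r + 1 - i = (r - i) + 1 := by omega
      rw [this, Nat.descFactorial_succ, Nat.descFactorial_succ]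
      have : u - i - (r - i) = u - r := by omega
      rw [this, ← Nat.mul_assoc, Nat.mul_comm (u.descFactorial i) (u - r), Nat.mul_assoc,
        IH i u hi]
    · have : i = r + 1 := by omega
      subst this
      simp
end Cube

namespace Cube
variable {n : ℕ}

open scoped Classical

lemma config_erase_mem {U : Finset (Fin n)} {t : ℕ → ℕ} {C : Finset (Cube n)}
    (hC : C ∈ configs U t) {a : Cube n} (haC : a ∈ C) {i₀ : ℕ} (hc : corank a = i₀)
    (hi₀ : 1 ≤ i₀) :
    (C.erase a).erase (hat a) ∈ configs (U \ supp a) (Function.update t i₀ (t i₀ - 1)) := by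
  rw [mem_configs] at hC ⊢
  obtain ⟨⟨h1, h2, h3⟩, h4⟩ := hC
  have hat_mem : hat a ∈ C := h2 a haC
  have hne_top : a ≠ ⊤ := (h1 a haC).1
  have hhne : hat a ≠ a := hat_ne_self hne_top
  have hmemD : ∀ b, b ∈ (C.erase a).erase (hat a) ↔ b ≠ hat a ∧ b ≠ a ∧ b ∈ C := by
    intro b
    simp [Finset.mem_erase, and_assoc]
  constructor
  · refine ⟨?_, ?_, ?_⟩
    · intro b hb
      rw [hmemD] at hb
      refine ⟨(h1 b hb.2.2).1, ?_⟩
      rw [Finset.subset_sdiff]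
      exact ⟨(h1 b hb.2.2).2, (h3 a haC b hb.2.2 hb.2.1 hb.1).symm⟩
    · intro b hb
      rw [hmemD] at hb ⊢
      refine ⟨?_, ?_, h2 b hb.2.2⟩
      · intro h; exact hb.2.1 (by rw [← hat_hat b, h, hat_hat])
      · intro h; exact hb.1 (by rw [← hat_hat b, h])
    · intro x hx y hy hyx hyhx
      rw [hmemD] at hx hy
      exact h3 x hx.2.2 y hy.2.2 hyx hyhx
  · intro i
    have hfe : ((C.erase a).erase (hat a)).filter (fun b => corank b = i) =
        ((C.filter fun b => corank b = i).erase a).erase (hat a) := by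
      rw [Finset.filter_erase, Finset.filter_erase]
    by_cases hii : i = i₀
    · subst hii
      have hta : t i ≠ 0 := by
        have h5 := h4 i
        rw [typeCount] at h5
        have ha' : a ∈ C.filter fun b => corank b = i := Finset.mem_filter.2 ⟨haC, hc⟩
        have h6 : 0 < (C.filter fun b => corank b = i).card := Finset.card_pos.2 ⟨a, ha'⟩
        omega
      rw [typeCount, hfe]
      have ha' : a ∈ C.filter fun b => corank b = i := Finset.mem_filter.2 ⟨haC, hc⟩
      have hhat' : hat a ∈ (C.filter fun b => corank b = i).erase a :=
        Finset.mem_erase.2 ⟨hhne, Finset.mem_filter.2 ⟨hat_mem, by rw [corank_hat]; exact hc⟩⟩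
      rw [Finset.card_erase_of_mem hhat', Finset.card_erase_of_mem ha']
      have h7 := h4 i
      rw [typeCount] at h7
      rw [h7, Function.update_self]
      omega
    · rw [typeCount, hfe, Finset.erase_eq_of_notMem, Finset.erase_eq_of_notMem,
        ← typeCount, h4 i, Function.update_of_ne hii]
      · intro h
        exact hii ((Finset.mem_filter.1 h).2.symm.trans hc)
      · intro h
        have h8 := (Finset.mem_filter.1 (Finset.mem_of_mem_erase h)).2
        rw [corank_hat, hc] at h8
        exact hii h8.symm

lemma config_insert_mem {U : Finset (Fin n)} {t : ℕ → ℕ} {D : Finset (Cube n)} {a : Cube n}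
    {i₀ : ℕ} (hc : corank a = i₀) (hi₀ : 1 ≤ i₀) (hsupp : supp a ⊆ U) (hta : t i₀ ≠ 0)
    (hD : D ∈ configs (U \ supp a) (Function.update t i₀ (t i₀ - 1))) :
    insert a (insert (hat a) D) ∈ configs U t ∧ a ∉ insert (hat a) D ∧ hat a ∉ D := by
  rw [mem_configs] at hD
  obtain ⟨⟨h1, h2, h3⟩, h4⟩ := hD
  have hne_top : a ≠ ⊤ := ne_top_of_corank hc hi₀
  have hhne : hat a ≠ a := hat_ne_self hne_top
  have hdisj : ∀ b ∈ D, Disjoint (supp a) (supp b) := by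
    intro b hb
    have h5 := (h1 b hb).2
    rw [Finset.subset_sdiff] at h5
    exact h5.2.symm
  have haD : a ∉ D := by
    intro h
    have h5 := hdisj a h
    rw [Finset.disjoint_self_iff_empty] at h5
    exact hne_top (eq_top_iff_supp.2 h5)
  have hhaD : hat a ∉ D := by
    intro h
    have h5 := hdisj (hat a) h
    rw [supp_hat, Finset.disjoint_self_iff_empty] at h5
    exact hne_top (eq_top_iff_supp.2 h5)
  have haI : a ∉ insert (hat a) D := by
    rw [Finset.mem_insert]
    rintro (h | h)
    · exact hhne h.symm
    · exact haD h
  have hmem : ∀ b, b ∈ insert a (insert (hat a) D) ↔ b = a ∨ b = hat a ∨ b ∈ D := by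
    intro b; simp [Finset.mem_insert]
  refine ⟨?_, haI, hhaD⟩
  rw [mem_configs]
  constructor
  · refine ⟨?_, ?_, ?_⟩
    · intro b hb
      rw [hmem] at hb
      rcases hb with rfl | rfl | hb
      · exact ⟨hne_top, hsupp⟩
      · exact ⟨by simpa using hne_top, by rw [supp_hat]; exact hsupp⟩
      · exact ⟨(h1 b hb).1, ((h1 b hb).2).trans (Finset.sdiff_subset)⟩
    · intro b hb
      rw [hmem] at hb
      rw [hmem]
      rcases hb with rfl | rfl | hb
      · exact Or.inr (Or.inl rfl)
      · exact Or.inl (by rw [hat_hat])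
      · exact Or.inr (Or.inr (h2 b hb))
    · intro x hx y hy hyx hyhx
      rw [hmem] at hx hy
      rcases hx with hxa | hxh | hx <;> rcases hy with hya | hyh | hy
      · exact absurd (hya.trans hxa.symm) hyx
      · exact absurd (hyh.trans (congrArg hat hxa).symm) hyhx
      · rw [hxa]; exact hdisj y hy
      · exact absurd (hya.trans ((hat_hat a).symm.trans (congrArg hat hxh).symm)) hyhx
      · exact absurd (hyh.trans hxh.symm) hyx
      · rw [hxh, supp_hat]; exact hdisj y hy
      · rw [hya]; exact (hdisj x hx).symm
      · rw [hyh, supp_hat]; exact (hdisj x hx).symm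
      · exact h3 x hx y hy hyx hyhx
  · intro i
    have hfi : ∀ (s : Finset (Cube n)) (b : Cube n), b ∉ s → corank b = i →
        (Finset.filter (fun x => corank x = i) (insert b s)) =
          insert b (Finset.filter (fun x => corank x = i) s) := by
      intro s b hb hcb
      rw [Finset.filter_insert, if_pos hcb]
    by_cases hii : i = i₀
    · subst hii
      rw [typeCount, hfi _ a haI hc, hfi _ (hat a) hhaD (by rw [corank_hat]; exact hc)]
      rw [Finset.card_insert_of_notMem, Finset.card_insert_of_notMem]
      · have h5 := h4 i
        rw [typeCount] at h5
        rw [h5, Function.update_self]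
        omega
      · intro h; exact hhaD (Finset.mem_filter.1 h).1
      · intro h
        rcases Finset.mem_insert.1 h with h' | h'
        · exact hhne h'.symm
        · exact haD (Finset.mem_filter.1 h').1
    · rw [typeCount, Finset.filter_insert, if_neg (by rw [hc]; exact fun h => hii h.symm),
        Finset.filter_insert, if_neg (by rw [corank_hat, hc]; exact fun h => hii h.symm),
        ← typeCount, h4 i, Function.update_of_ne hii]

lemma sigma_bij (U : Finset (Fin n)) (t : ℕ → ℕ) (i₀ : ℕ) (hi₀ : 1 ≤ i₀) (hta : t i₀ ≠ 0) :
    ((configs U t).sigma fun C => C.filter fun a => corank a = i₀).card =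
      ((Finset.univ.filter fun a : Cube n => corank a = i₀ ∧ supp a ⊆ U).sigma fun a =>
        configs (U \ supp a) (Function.update t i₀ (t i₀ - 1))).card := by
  apply Finset.card_nbij'
    (i := fun p => ⟨p.2, (p.1.erase p.2).erase (hat p.2)⟩)
    (j := fun q => ⟨insert q.1 (insert (hat q.1) q.2), q.1⟩)
  · rintro ⟨C, a⟩ hp
    rw [Finset.mem_coe, Finset.mem_sigma] at hp
    obtain ⟨hC, ha⟩ := hp
    rw [Finset.mem_filter] at ha
    rw [Finset.mem_coe, Finset.mem_sigma, Finset.mem_filter]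
    have hsupp : supp a ⊆ U := ((mem_configs.1 hC).1.1 a ha.1).2
    exact ⟨⟨Finset.mem_univ a, ha.2, hsupp⟩, config_erase_mem hC ha.1 ha.2 hi₀⟩
  · rintro ⟨a, D⟩ hq
    rw [Finset.mem_coe, Finset.mem_sigma, Finset.mem_filter] at hq
    obtain ⟨⟨_, hc, hsupp⟩, hD⟩ := hq
    obtain ⟨hC', haI, hhaD⟩ := config_insert_mem hc hi₀ hsupp hta hD
    rw [Finset.mem_coe, Finset.mem_sigma]
    exact ⟨hC', Finset.mem_filter.2 ⟨Finset.mem_insert_self _ _, hc⟩⟩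
  · rintro ⟨C, a⟩ hp
    rw [Finset.mem_coe, Finset.mem_sigma] at hp
    obtain ⟨hC, ha⟩ := hp
    rw [Finset.mem_filter] at ha
    obtain ⟨⟨h1, h2, h3⟩, _⟩ := mem_configs.1 hC
    have hat_mem : hat a ∈ C := h2 a ha.1
    have hhne : hat a ≠ a := hat_ne_self (h1 a ha.1).1
    dsimp only
    have h9 : insert a (insert (hat a) ((C.erase a).erase (hat a))) = C := by
      rw [Finset.insert_erase (Finset.mem_erase.2 ⟨hhne, hat_mem⟩), Finset.insert_erase ha.1]
    rw [h9]
  · rintro ⟨a, D⟩ hq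
    rw [Finset.mem_coe, Finset.mem_sigma, Finset.mem_filter] at hq
    obtain ⟨⟨_, hc, hsupp⟩, hD⟩ := hq
    obtain ⟨hC', haI, hhaD⟩ := config_insert_mem hc hi₀ hsupp hta hD
    dsimp only
    have h9 : ((insert a (insert (hat a) D)).erase a).erase (hat a) = D := by
      rw [Finset.erase_insert haI, Finset.erase_insert hhaD]
    rw [h9]

end Cube

namespace Cube
variable {n : ℕ}

open scoped Classical

lemma corank_le_card {a : Cube n} {U : Finset (Fin n)} (h : supp a ⊆ U) :
    corank a ≤ U.card := by
  rw [corank_eq_card_supp]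
  exact Finset.card_le_card h

theorem configs_card : ∀ (K : ℕ) (U : Finset (Fin n)) (t : ℕ → ℕ),
    t 0 = 0 → (∀ i, n < i → t i = 0) → ∑ i ∈ Finset.Icc 1 n, t i = K →
    (configs U t).card * ∏ i ∈ Finset.Icc 1 n, (Nat.factorial i ^ t i * Nat.factorial (t i)) =
      2 ^ ((∑ i ∈ Finset.Icc 1 n, i * t i) - K) *
        U.card.descFactorial (∑ i ∈ Finset.Icc 1 n, i * t i) := by
  intro K
  induction K using Nat.strong_induction_on with
  | _ K IH =>
    intro U t h0 hbig hK
    have htzero : ∀ i, i ∉ Finset.Icc 1 n → t i = 0 := by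
      intro i hi
      rw [Finset.mem_Icc] at hi
      rcases Nat.lt_or_ge i 1 with h | h
      · interval_cases i; exact h0
      · exact hbig i (by omega)
    rcases Nat.eq_zero_or_pos K with hK0 | hKpos
    · -- base case : all t i = 0
      subst hK0
      have hti : ∀ i, t i = 0 := by
        intro i
        by_cases hi : i ∈ Finset.Icc 1 n
        · have := (Finset.sum_eq_zero_iff.1 hK) i hi
          exact this
        · exact htzero i hi
      have hconf : configs U t = {∅} := by
        ext C
        rw [mem_configs, Finset.mem_singleton]
        constructor
        · rintro ⟨hcfg, hcnt⟩
          rw [Finset.eq_empty_iff_forall_notMem]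
          intro a haC
          have h5 := hcnt (corank a)
          rw [hti, typeCount] at h5
          have : a ∈ C.filter fun b => corank b = corank a :=
            Finset.mem_filter.2 ⟨haC, rfl⟩
          have := Finset.card_pos.2 ⟨a, this⟩
          omega
        · rintro rfl
          refine ⟨⟨by simp, by simp, by simp⟩, ?_⟩
          intro i
          rw [typeCount, Finset.filter_empty, Finset.card_empty, hti, Nat.mul_zero]
      have hsum0 : ∑ i ∈ Finset.Icc 1 n, i * t i = 0 := by
        apply Finset.sum_eq_zero
        intro i _
        rw [hti, Nat.mul_zero]
      rw [hconf, hsum0, Finset.card_singleton]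
      have hprod : ∏ i ∈ Finset.Icc 1 n, (Nat.factorial i ^ t i * Nat.factorial (t i)) = 1 := by
        apply Finset.prod_eq_one
        intro i _
        rw [hti]
        simp [Nat.factorial]
      rw [hprod]
      simp
    · -- inductive step
      have hex : ∃ i₀ ∈ Finset.Icc 1 n, t i₀ ≠ 0 := by
        by_contra h
        push_neg at h
        rw [Finset.sum_eq_zero h] at hK
        omega
      obtain ⟨i₀, hi₀mem, hti₀⟩ := hex
      rw [Finset.mem_Icc] at hi₀mem
      obtain ⟨hi₀1, hi₀n⟩ := hi₀mem
      set t' := Function.update t i₀ (t i₀ - 1) with ht'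
      obtain ⟨m, hm⟩ : ∃ m, t i₀ = m + 1 := ⟨t i₀ - 1, by omega⟩
      have hi₀Icc : i₀ ∈ Finset.Icc 1 n := Finset.mem_Icc.2 ⟨hi₀1, hi₀n⟩
      -- sums bookkeeping
      have hsum_t : ∑ i ∈ Finset.Icc 1 n, t i =
          t i₀ + ∑ i ∈ (Finset.Icc 1 n).erase i₀, t i :=
        (Finset.add_sum_erase _ _ hi₀Icc).symm
      have hsum_t' : ∑ i ∈ Finset.Icc 1 n, t' i =
          (t i₀ - 1) + ∑ i ∈ (Finset.Icc 1 n).erase i₀, t i := by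
        rw [← Finset.add_sum_erase _ t' hi₀Icc, ht', Function.update_self]
        congr 1
        apply Finset.sum_congr rfl
        intro i hi
        rw [Function.update_of_ne (Finset.mem_erase.1 hi).1]
      have hsum_r : ∑ i ∈ Finset.Icc 1 n, i * t i =
          i₀ * t i₀ + ∑ i ∈ (Finset.Icc 1 n).erase i₀, i * t i :=
        (Finset.add_sum_erase _ _ hi₀Icc).symm
      have hsum_r' : ∑ i ∈ Finset.Icc 1 n, i * t' i =
          i₀ * (t i₀ - 1) + ∑ i ∈ (Finset.Icc 1 n).erase i₀, i * t i := by
        rw [← Finset.add_sum_erase _ (fun i => i * t' i) hi₀Icc, ht', Function.update_self]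
        congr 1
        apply Finset.sum_congr rfl
        intro i hi
        rw [Function.update_of_ne (Finset.mem_erase.1 hi).1]
      have hSle : ∑ i ∈ (Finset.Icc 1 n).erase i₀, t i ≤
          ∑ i ∈ (Finset.Icc 1 n).erase i₀, i * t i := by
        apply Finset.sum_le_sum
        intro i hi
        have : 1 ≤ i := (Finset.mem_Icc.1 (Finset.mem_of_mem_erase hi)).1
        exact Nat.le_mul_of_pos_left (t i) (by omega)
      have hmul1 : i₀ * t i₀ = i₀ * (t i₀ - 1) + i₀ := by
        rw [hm]
        simp [Nat.mul_succ]
      have hmul2 : t i₀ - 1 ≤ i₀ * (t i₀ - 1) :=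
        Nat.le_mul_of_pos_left _ (by omega)
      -- abbreviations
      set K' := ∑ i ∈ Finset.Icc 1 n, t' i with hK'
      set r := ∑ i ∈ Finset.Icc 1 n, i * t i with hr
      set r' := ∑ i ∈ Finset.Icc 1 n, i * t' i with hr'
      have hK'val : K' = K - 1 := by omega
      have hr'val : r' = r - i₀ := by omega
      have hK'lt : K' < K := by omega
      have hi₀r : i₀ ≤ r := by omega
      have hrK : K ≤ r := by omega
      have hr'K' : K' ≤ r' := by omega
      have hexp : i₀ + (r' - K') = 1 + (r - K) := by omega
      -- hypotheses for t'
      have h0' : t' 0 = 0 := by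
        rw [ht', Function.update_of_ne (by omega)]
        exact h0
      have hbig' : ∀ i, n < i → t' i = 0 := by
        intro i hi
        rw [ht', Function.update_of_ne (by omega)]
        exact hbig i hi
      -- counting both sides of the sigma set
      have hA : ((configs U t).sigma fun C => C.filter fun a => corank a = i₀).card =
          (configs U t).card * (2 * t i₀) := by
        rw [Finset.card_sigma]
        rw [Finset.sum_congr rfl (fun C hC => ?_), Finset.sum_const, smul_eq_mul]
        have := (mem_configs.1 hC).2 i₀
        rw [typeCount] at this
        exact this
      have hB := sigma_bij U t i₀ hi₀1 hti₀
      -- evaluate the inner cardinalities using the inductive hypothesis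
      set F := Finset.univ.filter fun a : Cube n => corank a = i₀ ∧ supp a ⊆ U with hF
      set P' := ∏ i ∈ Finset.Icc 1 n, (Nat.factorial i ^ t' i * Nat.factorial (t' i)) with hP'
      have hinner : ∀ a ∈ F, (configs (U \ supp a) t').card * P' =
          2 ^ (r' - K') * (U.card - i₀).descFactorial r' := by
        intro a ha
        rw [hF, Finset.mem_filter] at ha
        have hcard : (U \ supp a).card = U.card - i₀ := by
          rw [Finset.card_sdiff_of_subset ha.2.2, ← corank_eq_card_supp, ha.2.1]
        rw [← hcard]
        exact IH K' hK'lt (U \ supp a) t' h0' hbig' rfl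
      -- main identity multiplied by P'
      have hmain : (configs U t).card * (2 * t i₀) * P' =
          F.card * (2 ^ (r' - K') * (U.card - i₀).descFactorial r') := by
        rw [← hA, hB, Finset.card_sigma, Finset.sum_mul]
        rw [Finset.sum_congr rfl hinner, Finset.sum_const, smul_eq_mul]
      have hFcard : F.card = 2 ^ i₀ * U.card.choose i₀ := card_faces U i₀
      -- product bookkeeping
      have hprod_t : ∏ i ∈ Finset.Icc 1 n, (Nat.factorial i ^ t i * Nat.factorial (t i)) =
          (Nat.factorial i₀ ^ t i₀ * Nat.factorial (t i₀)) *
            ∏ i ∈ (Finset.Icc 1 n).erase i₀,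
              (Nat.factorial i ^ t i * Nat.factorial (t i)) :=
        (Finset.mul_prod_erase _ _ hi₀Icc).symm
      have hprod_t' : P' = (Nat.factorial i₀ ^ (t i₀ - 1) * Nat.factorial (t i₀ - 1)) *
            ∏ i ∈ (Finset.Icc 1 n).erase i₀,
              (Nat.factorial i ^ t i * Nat.factorial (t i)) := by
        rw [hP', ← Finset.mul_prod_erase _ _ hi₀Icc, ht', Function.update_self]
        congr 1
        apply Finset.prod_congr rfl
        intro i hi
        rw [Function.update_of_ne (Finset.mem_erase.1 hi).1]
      have hprod_rel : ∏ i ∈ Finset.Icc 1 n,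
          (Nat.factorial i ^ t i * Nat.factorial (t i)) =
            P' * (Nat.factorial i₀ * t i₀) := by
        rw [hprod_t, hprod_t', hm]
        have e1 : Nat.factorial i₀ ^ (m + 1) = Nat.factorial i₀ ^ m * Nat.factorial i₀ :=
          pow_succ _ _
        have e2 : Nat.factorial (m + 1) = (m + 1) * Nat.factorial m := Nat.factorial_succ m
        simp only [Nat.add_sub_cancel, e1, e2]
        ring
      -- final arithmetic
      have goal2 : 2 * ((configs U t).card *
          ∏ i ∈ Finset.Icc 1 n, (Nat.factorial i ^ t i * Nat.factorial (t i))) =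
          2 * (2 ^ (r - K) * U.card.descFactorial r) := by
        calc 2 * ((configs U t).card *
              ∏ i ∈ Finset.Icc 1 n, (Nat.factorial i ^ t i * Nat.factorial (t i)))
            = ((configs U t).card * (2 * t i₀) * P') * Nat.factorial i₀ := by
              rw [hprod_rel]; ring
          _ = (2 ^ i₀ * U.card.choose i₀) *
                (2 ^ (r' - K') * (U.card - i₀).descFactorial r') * Nat.factorial i₀ := by
              rw [hmain, hFcard]
          _ = (2 ^ i₀ * 2 ^ (r' - K')) * ((Nat.factorial i₀ * U.card.choose i₀) *
                (U.card - i₀).descFactorial r') := by ring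
          _ = 2 ^ (i₀ + (r' - K')) * (U.card.descFactorial i₀ *
                (U.card - i₀).descFactorial (r - i₀)) := by
              rw [pow_add, hr'val, ← Nat.descFactorial_eq_factorial_mul_choose]
          _ = 2 ^ (1 + (r - K)) * U.card.descFactorial r := by
              rw [hexp, descFactorial_mul_descFactorial r i₀ U.card hi₀r]
          _ = 2 * (2 ^ (r - K) * U.card.descFactorial r) := by
              rw [pow_add, pow_one]; ring
      exact Nat.eq_of_mul_eq_mul_left (by norm_num) goal2

end Cube

namespace Cube
variable {n : ℕ}

lemma act_injective (σ : Equiv.Perm (Fin n)) (ε : Fin n → Bool) :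
    Function.Injective (act σ ε) :=
  Function.LeftInverse.injective (act_act σ ε)

lemma supp_act (σ : Equiv.Perm (Fin n)) (ε : Fin n → Bool) (x : Cube n) :
    supp (act σ ε x) = (supp x).image σ := by
  ext j
  simp only [supp, Finset.mem_union, mem_act_pos, mem_act_neg, Finset.mem_image]
  constructor
  · rintro ((⟨h1, h2⟩ | ⟨h1, h2⟩) | (⟨h1, h2⟩ | ⟨h1, h2⟩)) <;>
      exact ⟨σ.symm j, by simp [h2], by simp⟩
  · rintro ⟨i, hi, rfl⟩
    have hs : σ.symm (σ i) = i := σ.symm_apply_apply i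
    rcases hε : ε i with _ | _ <;> rcases hi with hi | hi <;>
      simp [hs, hε, hi]

lemma act_hat (σ : Equiv.Perm (Fin n)) (ε : Fin n → Bool) (x : Cube n) :
    act σ ε (hat x) = hat (act σ ε x) := by
  apply Cube.ext <;> ext j <;>
    simp only [mem_act_pos, mem_act_neg, hat_pos, hat_neg] <;> tauto

lemma act_fixed {σ : Equiv.Perm (Fin n)} {ε : Fin n → Bool} {x : Cube n}
    (h : ∀ j ∈ supp x, σ j = j ∧ ε j = false) : act σ ε x = x := by
  have hsymm : ∀ j, σ.symm j ∈ supp x → σ.symm j = j := by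
    intro j hj
    have h1 := (h _ hj).1
    exact h1.symm.trans (σ.apply_symm_apply j)
  apply Cube.ext <;> ext j <;> simp only [mem_act_pos, mem_act_neg]
  · constructor
    · rintro (⟨h1, h2⟩ | ⟨h1, h2⟩)
      · have hj := hsymm j (Finset.mem_union_right _ h2)
        have := (h _ (hj ▸ Finset.mem_union_right _ h2 : j ∈ supp x)).2
        rw [hj] at h1
        rw [this] at h1
        exact absurd h1 (by simp)
      · have hj := hsymm j (Finset.mem_union_left _ h2)
        rwa [hj] at h2
    · intro hj
      have hsx : j ∈ supp x := Finset.mem_union_left _ hj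
      have h1 := (h j hsx).1
      have h2 := (h j hsx).2
      have hs : σ.symm j = j := (Equiv.symm_apply_eq σ).2 h1.symm
      rw [hs]
      exact Or.inr ⟨h2, hj⟩
  · constructor
    · rintro (⟨h1, h2⟩ | ⟨h1, h2⟩)
      · have hj := hsymm j (Finset.mem_union_left _ h2)
        have := (h _ (hj ▸ Finset.mem_union_left _ h2 : j ∈ supp x)).2
        rw [hj] at h1
        rw [this] at h1
        exact absurd h1 (by simp)
      · have hj := hsymm j (Finset.mem_union_right _ h2)
        rwa [hj] at h2
    · intro hj
      have hsx : j ∈ supp x := Finset.mem_union_right _ hj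
      have h1 := (h j hsx).1
      have h2 := (h j hsx).2
      have hs : σ.symm j = j := (Equiv.symm_apply_eq σ).2 h1.symm
      rw [hs]
      exact Or.inr ⟨h2, hj⟩

lemma act_comp (σ₀ σ₁ : Equiv.Perm (Fin n)) (ε₀ ε₁ : Fin n → Bool) (x : Cube n) :
    act σ₁ ε₁ (act σ₀ ε₀ x) =
      act (σ₀.trans σ₁) (fun i => xor (ε₀ i) (ε₁ (σ₀ i))) x := by
  apply Cube.ext <;> ext j <;>
    simp only [mem_act_pos, mem_act_neg, Equiv.symm_trans_apply] <;>
    rcases hε1 : ε₁ (σ₁.symm j) with _ | _ <;>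
    rcases hε0 : ε₀ (σ₀.symm (σ₁.symm j)) with _ | _ <;>
    simp [hε1, hε0, Equiv.apply_symm_apply] <;> tauto

end Cube

namespace Cube
variable {n : ℕ}

lemma exists_move (U : Finset (Fin n)) (a b : Cube n) (ha : supp a ⊆ U) (hb : supp b ⊆ U)
    (hcr : corank b = corank a) :
    ∃ (σ : Equiv.Perm (Fin n)) (ε : Fin n → Bool),
      (∀ j ∉ U, σ j = j ∧ ε j = false) ∧ (∀ j ∈ U, σ j ∈ U) ∧ act σ ε a = b := by
  have hcard : (supp a).card = (supp b).card := by
    rw [← corank_eq_card_supp, ← corank_eq_card_supp, hcr]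
  have hcard' : (U \ supp a).card = (U \ supp b).card := by
    rw [Finset.card_sdiff_of_subset ha, Finset.card_sdiff_of_subset hb, hcard]
  set e := Finset.equivOfCardEq hcard with he
  set e' := Finset.equivOfCardEq hcard' with he'
  set f : Fin n → Fin n := fun j =>
    if h : j ∈ supp a then ↑(e ⟨j, h⟩)
    else if h' : j ∈ U \ supp a then ↑(e' ⟨j, h'⟩) else j with hf
  have hval1 : ∀ j (h : j ∈ supp a), f j = ↑(e ⟨j, h⟩) := by
    intro j h; rw [hf]; simp only [dif_pos h]
  have hval2 : ∀ j (h : j ∉ supp a) (h' : j ∈ U \ supp a), f j = ↑(e' ⟨j, h'⟩) := by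
    intro j h h'; rw [hf]; simp only [dif_neg h, dif_pos h']
  have hval3 : ∀ j, j ∉ supp a → j ∉ U \ supp a → f j = j := by
    intro j h h'; rw [hf]; simp only [dif_neg h, dif_neg h']
  have hmem1 : ∀ j (h : j ∈ supp a), f j ∈ supp b := by
    intro j h; rw [hval1 j h]; exact (e ⟨j, h⟩).2
  have hmem2 : ∀ j (h : j ∉ supp a) (h' : j ∈ U \ supp a), f j ∈ U \ supp b := by
    intro j h h'; rw [hval2 j h h']; exact (e' ⟨j, h'⟩).2
  have hUnot : ∀ j, j ∉ supp a → j ∉ U \ supp a → j ∉ U := by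
    intro j h h' hU
    exact h' (Finset.mem_sdiff.2 ⟨hU, h⟩)
  have finj : Function.Injective f := by
    intro x y hxy
    by_cases hx : x ∈ supp a <;> by_cases hy : y ∈ supp a
    · rw [hval1 x hx, hval1 y hy] at hxy
      have := e.injective (Subtype.ext hxy)
      exact congrArg Subtype.val this
    · exfalso
      have h1 := hmem1 x hx
      by_cases hy' : y ∈ U \ supp a
      · have h2 := hmem2 y hy hy'
        rw [hxy] at h1
        exact (Finset.mem_sdiff.1 h2).2 h1
      · have h2 := hUnot y hy hy'
        rw [hval3 y hy hy'] at hxy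
        rw [hxy] at h1
        exact h2 (hb h1)
    · exfalso
      have h1 := hmem1 y hy
      by_cases hx' : x ∈ U \ supp a
      · have h2 := hmem2 x hx hx'
        rw [← hxy] at h1
        exact (Finset.mem_sdiff.1 h2).2 h1
      · have h2 := hUnot x hx hx'
        rw [hval3 x hx hx'] at hxy
        rw [← hxy] at h1
        exact h2 (hb h1)
    · by_cases hx' : x ∈ U \ supp a <;> by_cases hy' : y ∈ U \ supp a
      · rw [hval2 x hx hx', hval2 y hy hy'] at hxy
        have := e'.injective (Subtype.ext hxy)
        exact congrArg Subtype.val this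
      · exfalso
        have h1 := hmem2 x hx hx'
        have h2 := hUnot y hy hy'
        rw [hval3 y hy hy'] at hxy
        rw [hxy] at h1
        exact h2 (Finset.mem_sdiff.1 h1).1
      · exfalso
        have h1 := hmem2 y hy hy'
        have h2 := hUnot x hx hx'
        rw [hval3 x hx hx'] at hxy
        rw [← hxy] at h1
        exact h2 (Finset.mem_sdiff.1 h1).1
      · rw [hval3 x hx hx', hval3 y hy hy'] at hxy
        exact hxy
  set σ := Equiv.ofBijective f (Finite.injective_iff_bijective.1 finj) with hσ
  have hσval : ∀ j, σ j = f j := fun j => rfl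
  set ε : Fin n → Bool := fun j =>
    if j ∈ supp a then (decide (j ∈ a.neg) != decide (f j ∈ b.neg)) else false with hε
  have himg : (supp a).image f = supp b := by
    apply Finset.eq_of_subset_of_card_le
    · intro j hj
      obtain ⟨i, hi, rfl⟩ := Finset.mem_image.1 hj
      exact hmem1 i hi
    · rw [Finset.card_image_of_injective _ finj, hcard]
  have hsymm_mem : ∀ j, j ∈ supp b ↔ σ.symm j ∈ supp a := by
    intro j
    constructor
    · intro hj
      rw [← himg] at hj
      obtain ⟨i, hi, hij⟩ := Finset.mem_image.1 hj
      have : σ i = j := hij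
      rw [← this, σ.symm_apply_apply]
      exact hi
    · intro hj
      have := hmem1 _ hj
      rw [← hσval, σ.apply_symm_apply] at this
      exact this
  refine ⟨σ, ε, ?_, ?_, ?_⟩
  · intro j hj
    have h1 : j ∉ supp a := fun h => hj (ha h)
    have h2 : j ∉ U \ supp a := fun h => hj (Finset.mem_sdiff.1 h).1
    exact ⟨hval3 j h1 h2, by rw [hε]; simp [h1]⟩
  · intro j hj
    by_cases h1 : j ∈ supp a
    · exact hb (hmem1 j h1)
    · have h2 : j ∈ U \ supp a := Finset.mem_sdiff.2 ⟨hj, h1⟩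
      exact (Finset.mem_sdiff.1 (hmem2 j h1 h2)).1
  · -- act σ ε a = b
    have key : ∀ j, (j ∈ (act σ ε a).pos ↔ j ∈ b.pos) ∧ (j ∈ (act σ ε a).neg ↔ j ∈ b.neg) := by
      intro j
      by_cases hjb : j ∈ supp b
      · have hia : σ.symm j ∈ supp a := (hsymm_mem j).1 hjb
        set i := σ.symm j with hi
        have hij : σ i = j := σ.apply_symm_apply j
        have hfi : f i = j := by rw [← hσval]; exact hij
        have hεi : ε i = (decide (i ∈ a.neg) != decide (j ∈ b.neg)) := by
          rw [hε]; simp only [if_pos hia, hfi]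
        rcases Finset.mem_union.1 hia with hip | hin
        · have hin' : i ∉ a.neg := Finset.disjoint_left.1 a.disj hip
          rcases Finset.mem_union.1 hjb with hjp | hjn
          · have hjn' : j ∉ b.neg := Finset.disjoint_left.1 b.disj hjp
            have : ε i = false := by rw [hεi]; simp [hin', hjn']
            constructor
            · rw [mem_act_pos, ← hi, this]
              simp [hip, hjp, hin']
            · rw [mem_act_neg, ← hi, this]
              simp [hin', hip, hjn']
          · have hjp' : j ∉ b.pos := fun h => Finset.disjoint_left.1 b.disj h hjn
            have : ε i = true := by rw [hεi]; simp [hin', hjn]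
            constructor
            · rw [mem_act_pos, ← hi, this]
              simp [hin', hjp']
            · rw [mem_act_neg, ← hi, this]
              simp [hip, hjn]
        · have hip' : i ∉ a.pos := fun h => Finset.disjoint_left.1 a.disj h hin
          rcases Finset.mem_union.1 hjb with hjp | hjn
          · have hjn' : j ∉ b.neg := Finset.disjoint_left.1 b.disj hjp
            have : ε i = true := by rw [hεi]; simp [hin, hjn']
            constructor
            · rw [mem_act_pos, ← hi, this]
              simp [hin, hjp]
            · rw [mem_act_neg, ← hi, this]
              simp [hip', hjn']
          · have hjp' : j ∉ b.pos := fun h => Finset.disjoint_left.1 b.disj h hjn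
            have : ε i = false := by rw [hεi]; simp [hin, hjn]
            constructor
            · rw [mem_act_pos, ← hi, this]
              simp [hip', hjp']
            · rw [mem_act_neg, ← hi, this]
              simp [hin, hjn]
      · have hia : σ.symm j ∉ supp a := fun h => hjb ((hsymm_mem j).2 h)
        have h1 : σ.symm j ∉ a.pos := fun h => hia (Finset.mem_union_left _ h)
        have h2 : σ.symm j ∉ a.neg := fun h => hia (Finset.mem_union_right _ h)
        have h3 : j ∉ b.pos := fun h => hjb (Finset.mem_union_left _ h)
        have h4 : j ∉ b.neg := fun h => hjb (Finset.mem_union_right _ h)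
        constructor
        · rw [mem_act_pos]; simp [h1, h2, h3]
        · rw [mem_act_neg]; simp [h1, h2, h4]
    apply Cube.ext <;> ext j
    · exact (key j).1
    · exact (key j).2

end Cube

namespace Cube
variable {n : ℕ}

open scoped Classical

lemma corank_act (σ : Equiv.Perm (Fin n)) (ε : Fin n → Bool) (x : Cube n) :
    corank (act σ ε x) = corank x :=
  corank_map (φ := actIso σ ε) x

lemma act_ne_top {σ : Equiv.Perm (Fin n)} {ε : Fin n → Bool} {x : Cube n} (h : x ≠ ⊤) :
    act σ ε x ≠ ⊤ := by
  intro hc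
  exact h (eq_top_iff_map (φ := actIso σ ε) |>.1 hc)

lemma config_image_act {U : Finset (Fin n)} {t : ℕ → ℕ} {C : Finset (Cube n)}
    (σ : Equiv.Perm (Fin n)) (ε : Fin n → Bool) (hσU : ∀ j ∈ U, σ j ∈ U)
    (hC : C ∈ configs U t) : C.image (act σ ε) ∈ configs U t := by
  rw [mem_configs] at hC ⊢
  obtain ⟨⟨h1, h2, h3⟩, h4⟩ := hC
  refine ⟨⟨?_, ?_, ?_⟩, ?_⟩
  · intro x hx
    obtain ⟨a, ha, rfl⟩ := Finset.mem_image.1 hx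
    refine ⟨act_ne_top (h1 a ha).1, ?_⟩
    rw [supp_act]
    intro j hj
    obtain ⟨i, hi, rfl⟩ := Finset.mem_image.1 hj
    exact hσU i ((h1 a ha).2 hi)
  · intro x hx
    obtain ⟨a, ha, rfl⟩ := Finset.mem_image.1 hx
    rw [← act_hat]
    exact Finset.mem_image_of_mem _ (h2 a ha)
  · intro x hx y hy hyx hyhx
    obtain ⟨a, ha, rfl⟩ := Finset.mem_image.1 hx
    obtain ⟨c, hc, rfl⟩ := Finset.mem_image.1 hy
    have hne1 : c ≠ a := fun h => hyx (by rw [h])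
    have hne2 : c ≠ hat a := fun h => hyhx (by rw [h, act_hat])
    rw [supp_act, supp_act]
    exact (Finset.disjoint_image σ.injective).2 (h3 a ha c hc hne1 hne2)
  · intro i
    rw [typeCount, Finset.filter_image]
    have : ∀ x, corank (act σ ε x) = i ↔ corank x = i := by
      intro x; rw [corank_act]
    rw [Finset.filter_congr (fun x _ => this x)]
    rw [Finset.card_image_of_injective _ (act_injective σ ε)]
    exact h4 i

lemma typeCount_pos_mem {t : ℕ → ℕ} {U : Finset (Fin n)} {C : Finset (Cube n)}
    (hC : C ∈ configs U t) {i : ℕ} (hti : t i ≠ 0) :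
    ∃ b ∈ C, corank b = i := by
  have h4 := (mem_configs.1 hC).2 i
  rw [typeCount] at h4
  have : 0 < (C.filter fun a => corank a = i).card := by omega
  obtain ⟨b, hb⟩ := Finset.card_pos.1 this
  rw [Finset.mem_filter] at hb
  exact ⟨b, hb.1, hb.2⟩

theorem trans_aux : ∀ (N : ℕ) (U : Finset (Fin n)) (t : ℕ → ℕ) (C₁ C₂ : Finset (Cube n)),
    C₁ ∈ configs U t → C₂ ∈ configs U t → C₁.card = N →
    ∃ (σ : Equiv.Perm (Fin n)) (ε : Fin n → Bool),
      (∀ j ∉ U, σ j = j ∧ ε j = false) ∧ C₁.image (act σ ε) = C₂ := by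
  intro N
  induction N using Nat.strong_induction_on with
  | _ N IH =>
    intro U t C₁ C₂ h1 h2 hN
    rcases Nat.eq_zero_or_pos N with hN0 | hNpos
    · subst hN0
      have hC1 : C₁ = ∅ := Finset.card_eq_zero.1 hN
      have hC2 : C₂ = ∅ := by
        rw [Finset.eq_empty_iff_forall_notMem]
        intro b hb
        have hb1 := (mem_configs.1 h2).2 (corank b)
        have hb2 := (mem_configs.1 h1).2 (corank b)
        rw [typeCount] at hb1 hb2
        rw [hC1] at hb2
        simp only [Finset.filter_empty, Finset.card_empty] at hb2
        have : b ∈ C₂.filter fun a => corank a = corank b :=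
          Finset.mem_filter.2 ⟨hb, rfl⟩
        have := Finset.card_pos.2 ⟨b, this⟩
        omega
      exact ⟨1, fun _ => false, fun j _ => ⟨rfl, rfl⟩, by rw [hC1, hC2, Finset.image_empty]⟩
    · obtain ⟨a, ha⟩ := Finset.card_pos.1 (hN ▸ hNpos)
      obtain ⟨⟨h1top, h1hat, h1disj⟩, h1cnt⟩ := mem_configs.1 h1
      set i₀ := corank a with hi₀
      have hi₀1 : 1 ≤ i₀ := by
        have := (h1top a ha).1
        rw [hi₀]
        rcases Nat.eq_zero_or_pos (corank a) with h | h
        · exact absurd (corank_eq_zero_iff.1 h) this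
        · exact h
      have hti₀ : t i₀ ≠ 0 := by
        have h4 := h1cnt i₀
        rw [typeCount] at h4
        have : a ∈ C₁.filter fun x => corank x = i₀ := Finset.mem_filter.2 ⟨ha, rfl⟩
        have := Finset.card_pos.2 ⟨a, this⟩
        omega
      obtain ⟨b, hbC2, hbcor⟩ := typeCount_pos_mem h2 hti₀
      -- move a onto b
      obtain ⟨σ₀, ε₀, hfix₀, hU₀, hab⟩ :=
        exists_move U a b (h1top a ha).2 ((mem_configs.1 h2).1.1 b hbC2).2 hbcor
      set C₁' := C₁.image (act σ₀ ε₀) with hC₁'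
      have hC₁'cfg : C₁' ∈ configs U t := config_image_act σ₀ ε₀ hU₀ h1
      have hbC₁' : b ∈ C₁' := by
        rw [hC₁', Finset.mem_image]
        exact ⟨a, ha, hab⟩
      -- erase the pair b, hat b from both configurations
      set t' := Function.update t i₀ (t i₀ - 1) with ht'
      have hD₁ : (C₁'.erase b).erase (hat b) ∈ configs (U \ supp b) t' :=
        config_erase_mem hC₁'cfg hbC₁' hbcor hi₀1
      have hD₂ : (C₂.erase b).erase (hat b) ∈ configs (U \ supp b) t' :=
        config_erase_mem h2 hbC2 hbcor hi₀1
      have hbne : hat b ≠ b := hat_ne_self (ne_top_of_corank hbcor hi₀1)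
      have hhatbC₁' : hat b ∈ C₁' := (mem_configs.1 hC₁'cfg).1.2.1 b hbC₁'
      have hhatbC₂ : hat b ∈ C₂ := (mem_configs.1 h2).1.2.1 b hbC2
      have hcard : ((C₁'.erase b).erase (hat b)).card = N - 2 := by
        rw [Finset.card_erase_of_mem (Finset.mem_erase.2 ⟨hbne, hhatbC₁'⟩),
          Finset.card_erase_of_mem hbC₁', hC₁',
          Finset.card_image_of_injective _ (act_injective σ₀ ε₀), hN]
        omega
      have hlt : N - 2 < N := by omega
      obtain ⟨σ₁, ε₁, hfix₁, himg₁⟩ :=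
        IH (N - 2) hlt (U \ supp b) t' _ _ hD₁ hD₂ hcard
      -- act σ₁ ε₁ fixes b and hat b
      have hfixsupp : ∀ j ∈ supp b, σ₁ j = j ∧ ε₁ j = false := by
        intro j hj
        apply hfix₁
        rw [Finset.mem_sdiff]
        intro h
        exact h.2 hj
      have hb1 : act σ₁ ε₁ b = b := act_fixed hfixsupp
      have hb2 : act σ₁ ε₁ (hat b) = hat b := act_fixed (by rw [supp_hat]; exact hfixsupp)
      -- reconstruct C₂ from the erased configuration
      have hC₂eq : insert b (insert (hat b) ((C₂.erase b).erase (hat b))) = C₂ := by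
        rw [Finset.insert_erase (Finset.mem_erase.2 ⟨hbne, hhatbC₂⟩), Finset.insert_erase hbC2]
      have hC₁'eq : insert b (insert (hat b) ((C₁'.erase b).erase (hat b))) = C₁' := by
        rw [Finset.insert_erase (Finset.mem_erase.2 ⟨hbne, hhatbC₁'⟩),
          Finset.insert_erase hbC₁']
      have himg2 : C₁'.image (act σ₁ ε₁) = C₂ := by
        rw [← hC₁'eq, Finset.image_insert, Finset.image_insert, hb1, hb2, himg₁, hC₂eq]
      refine ⟨σ₀.trans σ₁, fun i => xor (ε₀ i) (ε₁ (σ₀ i)), ?_, ?_⟩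
      · intro j hj
        have hf₀ := hfix₀ j hj
        have hf₁ := hfix₁ j (by rw [Finset.mem_sdiff]; exact fun h => hj h.1)
        constructor
        · simp only [Equiv.trans_apply, hf₀.1, hf₁.1]
        · show xor (ε₀ j) (ε₁ (σ₀ j)) = false
          rw [hf₀.1, hf₀.2, hf₁.2]
          rfl
      · rw [← himg2, hC₁', Finset.image_image]
        apply Finset.image_congr
        intro x _
        exact (act_comp σ₀ σ₁ ε₀ ε₁ x).symm

lemma configs_transitive {t : ℕ → ℕ} {C₁ C₂ : Finset (Cube n)}
    (h1 : C₁ ∈ configs Finset.univ t) (h2 : C₂ ∈ configs Finset.univ t) :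
    ∃ (σ : Equiv.Perm (Fin n)) (ε : Fin n → Bool), C₁.image (act σ ε) = C₂ := by
  obtain ⟨σ, ε, _, himg⟩ := trans_aux C₁.card Finset.univ t C₁ C₂ h1 h2 rfl
  exact ⟨σ, ε, himg⟩

end Cube

namespace Cube
variable {n : ℕ}

open scoped Classical

lemma typeSet_eq_corank (B : Set (Cube n)) (i : ℕ) :
    typeSet B i = {a | a ∈ coAt B ∧ corank a = i} := by
  ext a
  simp only [typeSet, Set.mem_setOf_eq, ncard_coatomsAbove]

/-- The coatom set of an MR-subalgebra, as a finset. -/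
noncomputable def coAtF (B : Set (Cube n)) : Finset (Cube n) :=
  (Set.toFinite (coAt B)).toFinset

@[simp] lemma mem_coAtF {B : Set (Cube n)} {a : Cube n} : a ∈ coAtF B ↔ a ∈ coAt B :=
  Set.Finite.mem_toFinset _

@[simp] lemma coe_coAtF (B : Set (Cube n)) : (coAtF B : Set (Cube n)) = coAt B :=
  Set.Finite.coe_toFinset _

lemma coAtF_mem_configs {B : Set (Cube n)} (hB : IsMRSub B) {t : ℕ → ℕ}
    (ht : ∀ i, 2 * t i = (typeSet B i).ncard) : coAtF B ∈ configs Finset.univ t := by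
  rw [mem_configs]
  refine ⟨⟨?_, ?_, ?_⟩, ?_⟩
  · intro a ha
    exact ⟨coAt_ne_top (mem_coAtF.1 ha), Finset.subset_univ _⟩
  · intro a ha
    exact mem_coAtF.2 (hB.hat_coAt (mem_coAtF.1 ha))
  · intro a ha b hb hne hne'
    exact hB.coAt_disjoint_supp (mem_coAtF.1 ha) (mem_coAtF.1 hb) hne hne'
  · intro i
    have hset : ((coAtF B).filter fun a => corank a = i : Finset (Cube n)) =
        (Set.toFinite (typeSet B i)).toFinset := by
      ext a
      rw [Finset.mem_filter, mem_coAtF, Set.Finite.mem_toFinset, typeSet_eq_corank]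
      rfl
    rw [typeCount, hset, ← Set.ncard_coe_finset, Set.Finite.coe_toFinset, ht i]

lemma typeSet_image {φ : Cube n ≃o Cube n} {B : Set (Cube n)} (i : ℕ) :
    typeSet (φ '' B) i = φ '' typeSet B i := by
  rw [typeSet_eq_corank, typeSet_eq_corank, coAt_image]
  ext a
  simp only [Set.mem_setOf_eq, Set.mem_image]
  constructor
  · rintro ⟨⟨x, hx, rfl⟩, h2⟩
    exact ⟨x, ⟨hx, by rw [← corank_map (φ := φ) x]; exact h2⟩, rfl⟩
  · rintro ⟨x, ⟨hx, h2⟩, rfl⟩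
    exact ⟨⟨x, hx, rfl⟩, by rw [corank_map]; exact h2⟩

end Cube

open Cube in
theorem orbit_card' (n : ℕ) (A : Set (Cube n)) (hA : Cube.IsMRSub A)
    (t : ℕ → ℕ) (ht : ∀ i, 2 * t i = (Cube.typeSet A i).ncard)
    (k r : ℕ) (hk : k = ∑ i ∈ Finset.Icc 1 n, t i)
    (hr : r = ∑ i ∈ Finset.Icc 1 n, i * t i) :
    ({S : Set (Cube n) | ∃ φ ∈ Cube.AutSet n, φ '' A = S}).ncard *
        ∏ i ∈ Finset.Icc 1 n, (Nat.factorial i ^ t i * Nat.factorial (t i)) =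
      2 ^ (r - k) * Nat.choose n r * Nat.factorial r := by
  classical
  set Orb := {S : Set (Cube n) | ∃ φ ∈ Cube.AutSet n, φ '' A = S} with hOrb
  -- every member of the orbit is an MR-subalgebra of the same type
  have horb : ∀ S ∈ Orb, IsMRSub S ∧ coAtF S ∈ configs Finset.univ t := by
    rintro S ⟨φ, hφ, rfl⟩
    have hmr : IsMRSub (φ '' A) := hφ.isMRSub_image hA
    refine ⟨hmr, coAtF_mem_configs hmr ?_⟩
    intro i
    rw [typeSet_image, Set.ncard_image_of_injective _ φ.injective]
    exact ht i
  -- the coatom map is injective on the orbit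
  have hinj : Set.InjOn coAtF Orb := by
    intro S₁ h₁ S₂ h₂ he
    have e1 : coAt S₁ = coAt S₂ := by
      rw [← coe_coAtF, ← coe_coAtF, he]
    exact ((horb S₁ h₁).1).eq_of_coAt_eq ((horb S₂ h₂).1) e1
  -- A belongs to its own orbit
  have hAOrb : A ∈ Orb := by
    refine ⟨OrderIso.refl (Cube n), ?_, ?_⟩
    · intro x y _
      rfl
    · simp
  -- the image of the orbit is exactly the set of configurations of type t
  have himg : coAtF '' Orb = ((configs Finset.univ t : Finset (Finset (Cube n))) : Set (Finset (Cube n))) := by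
    apply Set.Subset.antisymm
    · rintro _ ⟨S, hS, rfl⟩
      exact (horb S hS).2
    · intro C hC
      rw [Finset.mem_coe] at hC
      obtain ⟨σ, ε, hmap⟩ := configs_transitive (horb A hAOrb).2 hC
      have hIs : actIso σ ε ∈ AutSet n := actIso_isAut σ ε
      refine ⟨(actIso σ ε) '' A, ⟨actIso σ ε, hIs, rfl⟩, ?_⟩
      have e1 : coAt ((actIso σ ε) '' A) = act σ ε '' coAt A := coAt_image
      rw [← hmap]
      apply Finset.coe_injective
      rw [coe_coAtF, e1, Finset.coe_image, coe_coAtF]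
  have hcardOrb : Orb.ncard = (configs (Finset.univ : Finset (Fin n)) t).card := by
    rw [← Set.ncard_image_of_injOn hinj, himg, Set.ncard_coe_finset]
  -- hypotheses on t
  have ht0 : t 0 = 0 := by
    have h1 := ht 0
    have h2 : typeSet A 0 = ∅ := by
      rw [typeSet_eq_corank, Set.eq_empty_iff_forall_notMem]
      rintro a ⟨ha, hc⟩
      exact coAt_ne_top ha (corank_eq_zero_iff.1 hc)
    rw [h2] at h1
    simp at h1
    omega
  have htbig : ∀ i, n < i → t i = 0 := by
    intro i hi
    have h1 := ht i
    have h2 : typeSet A i = ∅ := by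
      rw [typeSet_eq_corank, Set.eq_empty_iff_forall_notMem]
      rintro a ⟨ha, hc⟩
      have : corank a ≤ n := by
        rw [corank_eq_card_supp]
        exact le_trans (Finset.card_le_univ _) (by simp)
      omega
    rw [h2] at h1
    simp at h1
    omega
  have hmain := configs_card (n := n) k Finset.univ t ht0 htbig hk.symm
  rw [← hr] at hmain
  rw [hcardOrb, hmain]
  have hu : (Finset.univ : Finset (Fin n)).card = n := by simp
  rw [hu, Nat.descFactorial_eq_factorial_mul_choose]
  ring


/-- The orbit of an MR-subalgebra `A` of `𝓛ₙ` under the evaluation action of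
`Aut(𝓛ₙ)` satisfies `|Orb(A)| · ∏ᵢ (i!)^{tᵢ} tᵢ! = 2^{r-k} C(n,r) r!`. -/
theorem orbit_card (n : ℕ) (hn : 1 ≤ n) (A : Set (Cube n)) (hA : Cube.IsMRSub A)
    (t : ℕ → ℕ) (ht : ∀ i, 2 * t i = (Cube.typeSet A i).ncard)
    (k r : ℕ) (hk : k = ∑ i ∈ Finset.Icc 1 n, t i)
    (hr : r = ∑ i ∈ Finset.Icc 1 n, i * t i) :
    ({S : Set (Cube n) | ∃ φ ∈ Cube.AutSet n, φ '' A = S}).ncard *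
        ∏ i ∈ Finset.Icc 1 n, (Nat.factorial i ^ t i * Nat.factorial (t i)) =
      2 ^ (r - k) * Nat.choose n r * Nat.factorial r :=
  orbit_card' n A hA t ht k r hk hr
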